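/- The iterated Jackson q-integral admits the Al-Salam representation: (V_q^n f)(z) = ((1-q)^{n-1}/(q;q)_{n-1}) ∫_0^z z^{n-1} (qt/z; q)_{n-1} f(t) d_q t for n ≥ 1 and f, e.g., a polynomial. -/

import Mathlib

open Finset

noncomputable def jackson (q : ℂ) (f : ℂ → ℂ) (z : ℂ) : ℂ :=
  z * (1 - q) * ∑' k : ℕ, f (z * q ^ k) * q ^ k

/-- q-Pochhammer symbol `(a;q)_m`. -/
noncomputable def qPoch (a q : ℂ) (m : ℕ) : ℂ :=
  ∏ j ∈ Finset.range m, (1 - a * q ^ j)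

/-- The Jackson q-integration operator `V_q f(z) = ∫_0^z f(t) d_q t`. -/
noncomputable def Vq (q : ℂ) (f : ℂ → ℂ) : ℂ → ℂ := fun z => jackson q f z

lemma qnorm_lt (q : ℝ) (hq0 : 0 < q) (hq1 : q < 1) : ‖(q : ℂ)‖ < 1 := by
  rw [Complex.norm_real, Real.norm_eq_abs, abs_of_pos hq0]; exact hq1

lemma one_sub_pow_ne (q : ℝ) (hq0 : 0 < q) (hq1 : q < 1) (t : ℕ) (ht : 1 ≤ t) :
    (1 : ℂ) - (q : ℂ) ^ t ≠ 0 := by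
  rw [sub_ne_zero]
  intro h
  have : ((q ^ t : ℝ) : ℂ) = ((1 : ℝ) : ℂ) := by push_cast; exact h.symm
  have h2 : q ^ t = 1 := Complex.ofReal_inj.mp this
  have : q ^ t < 1 := pow_lt_one₀ hq0.le hq1 (by omega)
  linarith

lemma prodD_ne (q : ℝ) (hq0 : 0 < q) (hq1 : q < 1) (n k : ℕ) :
    (∏ j ∈ range n, (1 - (q : ℂ) ^ (k + 1 + j))) ≠ 0 := by
  apply Finset.prod_ne_zero_iff.mpr
  intro j _
  exact one_sub_pow_ne q hq0 hq1 _ (by omega)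

lemma qPoch_ne (q : ℝ) (hq0 : 0 < q) (hq1 : q < 1) (n : ℕ) :
    qPoch (q : ℂ) (q : ℂ) n ≠ 0 := by
  rw [qPoch]
  apply Finset.prod_ne_zero_iff.mpr
  intro j _
  rw [← pow_succ']
  exact one_sub_pow_ne q hq0 hq1 _ (by omega)

lemma qPoch_norm_le (q : ℝ) (hq0 : 0 < q) (hq1 : q < 1) (m n : ℕ) :
    ‖qPoch ((q : ℂ) ^ (m + 1)) (q : ℂ) n‖ ≤ 1 := by
  rw [qPoch, norm_prod]
  apply Finset.prod_le_one
  · intro j _; positivity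
  · intro j _
    have h : (1 : ℂ) - (q : ℂ) ^ (m + 1) * (q : ℂ) ^ j = ((1 - q ^ (m + 1 + j) : ℝ) : ℂ) := by
      push_cast [pow_add]; ring
    have h1 : q ^ (m + 1 + j) ≤ 1 := pow_le_one₀ hq0.le hq1.le
    have h0 : 0 ≤ q ^ (m + 1 + j) := by positivity
    rw [h, Complex.norm_real, Real.norm_eq_abs, abs_of_nonneg (by linarith)]
    linarith

lemma summable_qPoch (q : ℝ) (hq0 : 0 < q) (hq1 : q < 1) (n : ℕ) (x : ℂ) (hx : ‖x‖ < 1) :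
    Summable (fun m : ℕ => qPoch ((q : ℂ) ^ (m + 1)) (q : ℂ) n * x ^ m) := by
  apply Summable.of_norm_bounded (g := fun m => ‖x‖ ^ m)
    (summable_geometric_of_lt_one (norm_nonneg x) hx)
  intro m
  rw [norm_mul, norm_pow]
  calc ‖qPoch ((q:ℂ)^(m+1)) (q:ℂ) n‖ * ‖x‖ ^ m ≤ 1 * ‖x‖^m :=
        mul_le_mul_of_nonneg_right (qPoch_norm_le q hq0 hq1 m n) (by positivity)
    _ = ‖x‖ ^ m := one_mul _

lemma qpow_norm_lt (q : ℝ) (hq0 : 0 < q) (hq1 : q < 1) (k : ℕ) (hk : 1 ≤ k) :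
    ‖(q : ℂ) ^ k‖ < 1 := by
  rw [norm_pow]
  exact pow_lt_one₀ (norm_nonneg _) (qnorm_lt q hq0 hq1) (by omega)

lemma Tlem (q : ℝ) (hq0 : 0 < q) (hq1 : q < 1) :
    ∀ n k : ℕ, (∑' m : ℕ, qPoch ((q : ℂ) ^ (m + 1)) (q : ℂ) n * ((q : ℂ) ^ (k + 1)) ^ m)
      * ∏ j ∈ range (n + 1), (1 - (q : ℂ) ^ (k + 1 + j)) = qPoch (q : ℂ) (q : ℂ) n := by
  have hx : ∀ k : ℕ, ‖(q : ℂ) ^ (k + 1)‖ < 1 := fun k => qpow_norm_lt q hq0 hq1 _ (by omega)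
  intro n
  induction n with
  | zero =>
    intro k
    simp only [qPoch, range_zero, prod_empty, one_mul, zero_add, prod_range_one, add_zero]
    rw [tsum_geometric_of_norm_lt_one (hx k)]
    exact inv_mul_cancel₀ (one_sub_pow_ne q hq0 hq1 (k + 1) (by omega))
  | succ n ih =>
    intro k
    have hterm : ∀ m : ℕ, qPoch ((q : ℂ) ^ (m + 1)) (q : ℂ) (n + 1) * ((q : ℂ) ^ (k + 1)) ^ m
        = qPoch ((q : ℂ) ^ (m + 1)) (q : ℂ) n * ((q : ℂ) ^ (k + 1)) ^ m
          - (q : ℂ) ^ (n + 1) * (qPoch ((q : ℂ) ^ (m + 1)) (q : ℂ) n * ((q : ℂ) ^ (k + 2)) ^ m) := by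
      intro m
      rw [qPoch, prod_range_succ, ← qPoch]
      have h3 : (q : ℂ) ^ (m + 1) * (q : ℂ) ^ n * ((q : ℂ) ^ (k + 1)) ^ m
          = (q : ℂ) ^ (n + 1) * ((q : ℂ) ^ (k + 2)) ^ m := by
        rw [← pow_mul, ← pow_mul, ← pow_add, ← pow_add, ← pow_add]
        congr 1; ring
      linear_combination (-(qPoch ((q : ℂ) ^ (m + 1)) (q : ℂ) n)) * h3
    rw [tsum_congr hterm, Summable.tsum_sub (summable_qPoch q hq0 hq1 n _ (hx k))
      (Summable.mul_left _ (summable_qPoch q hq0 hq1 n _ (hx (k+1)))), tsum_mul_left]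
    have E1 : (∏ j ∈ range (n + 2), (1 - (q : ℂ) ^ (k + 1 + j)))
        = (∏ j ∈ range (n + 1), (1 - (q : ℂ) ^ (k + 1 + j))) * (1 - (q : ℂ) ^ (k + n + 2)) := by
      rw [prod_range_succ, show k + 1 + (n + 1) = k + n + 2 from by omega]
    have E2 : (∏ j ∈ range (n + 2), (1 - (q : ℂ) ^ (k + 1 + j)))
        = (∏ j ∈ range (n + 1), (1 - (q : ℂ) ^ (k + 2 + j))) * (1 - (q : ℂ) ^ (k + 1)) := by
      rw [prod_range_succ', show k + 1 + 0 = k + 1 from by omega]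
      congr 1
      exact Finset.prod_congr rfl fun j _ => by
        rw [show k + 1 + (j + 1) = k + 2 + j from by omega]
    have hP : qPoch (q : ℂ) (q : ℂ) (n + 1) = qPoch (q : ℂ) (q : ℂ) n * (1 - (q : ℂ) ^ (n + 1)) := by
      rw [qPoch, prod_range_succ, ← qPoch, pow_succ']
    rw [hP]
    linear_combination (1 - (q:ℂ) ^ (k + n + 2)) * ih k
      - (q:ℂ) ^ (n + 1) * (1 - (q:ℂ) ^ (k + 1)) * ih (k + 1)
      + (∑' m : ℕ, qPoch ((q : ℂ) ^ (m + 1)) (q : ℂ) n * ((q : ℂ) ^ (k + 1)) ^ m) * E1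
      - (q:ℂ) ^ (n + 1) * (∑' m : ℕ, qPoch ((q : ℂ) ^ (m + 1)) (q : ℂ) n * ((q : ℂ) ^ (k + 2)) ^ m) * E2

lemma mainlem (q : ℝ) (hq0 : 0 < q) (hq1 : q < 1) (a : ℕ → ℂ) (N : ℕ)
    (haN : ∀ k, N ≤ k → a k = 0) (f : ℂ → ℂ) (hf : ∀ z, f z = ∑' k : ℕ, a k * z ^ k) :
    ∀ n z, (Vq (q : ℂ))^[n] f z
      = ∑ k ∈ range N, a k * z ^ (k + n)
          * ((1 - (q : ℂ)) ^ n / ∏ j ∈ range n, (1 - (q : ℂ) ^ (k + 1 + j))) := by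
  intro n
  induction n with
  | zero =>
    intro z
    rw [Function.iterate_zero_apply, hf z]
    rw [tsum_eq_sum (s := range N) (fun k hk => by
      rw [haN k (by simpa using hk), zero_mul])]
    apply Finset.sum_congr rfl
    intro k _
    simp
  | succ n ih =>
    intro z
    rw [Function.iterate_succ_apply']
    show jackson (q : ℂ) ((Vq (q : ℂ))^[n] f) z = _
    rw [jackson]
    have hterm : ∀ m : ℕ, (Vq (q : ℂ))^[n] f (z * (q : ℂ) ^ m) * (q : ℂ) ^ m
        = ∑ k ∈ range N, (a k * z ^ (k + n)
            * ((1 - (q : ℂ)) ^ n / ∏ j ∈ range n, (1 - (q : ℂ) ^ (k + 1 + j))))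
            * ((q : ℂ) ^ (k + n + 1)) ^ m := by
      intro m
      rw [ih (z * (q : ℂ) ^ m), Finset.sum_mul]
      apply Finset.sum_congr rfl
      intro k _
      have hpow : (z * (q:ℂ)^m)^(k+n) * (q:ℂ)^m = z^(k+n) * ((q:ℂ)^(k+n+1))^m := by ring
      linear_combination (a k * ((1 - (q : ℂ)) ^ n
        / ∏ j ∈ range n, (1 - (q : ℂ) ^ (k + 1 + j)))) * hpow
    rw [tsum_congr hterm, Summable.tsum_finsetSum (fun k _ => Summable.mul_left (a k * z ^ (k + n)
              * ((1 - (q : ℂ)) ^ n / ∏ j ∈ range n, (1 - (q : ℂ) ^ (k + 1 + j))))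
      (summable_geometric_of_norm_lt_one (qpow_norm_lt q hq0 hq1 (k + n + 1) (by omega))))]
    rw [Finset.mul_sum]
    apply Finset.sum_congr rfl
    intro k _
    rw [tsum_mul_left, tsum_geometric_of_norm_lt_one (qpow_norm_lt q hq0 hq1 _ (by omega))]
    rw [prod_range_succ, show k + 1 + n = k + n + 1 from by omega]
    have h1 : (∏ j ∈ range n, (1 - (q : ℂ) ^ (k + 1 + j))) ≠ 0 := prodD_ne q hq0 hq1 n k
    have h2 : (1 : ℂ) - (q : ℂ) ^ (k + n + 1) ≠ 0 := one_sub_pow_ne q hq0 hq1 _ (by omega)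
    field_simp
    ring

/-- Al-Salam representation of the iterated Jackson q-integral:
`(V_q^n f)(z) = ((1-q)^{n-1}/(q;q)_{n-1}) ∫_0^z z^{n-1} (qt/z;q)_{n-1} f(t) d_q t`
for `n ≥ 1` and `f` a polynomial. -/
theorem alsalam (q : ℝ) (hq0 : 0 < q) (hq1 : q < 1) (a : ℕ → ℂ)
    (ha : ∃ N : ℕ, ∀ k, N ≤ k → a k = 0) (f : ℂ → ℂ)
    (hf : ∀ z, f z = ∑' k : ℕ, a k * z ^ k) (n : ℕ) (hn : 1 ≤ n) (z : ℂ) (hz : z ≠ 0) :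
    (Vq (q : ℂ))^[n] f z
      = (1 - (q : ℂ)) ^ (n - 1) / qPoch (q : ℂ) (q : ℂ) (n - 1)
        * jackson (q : ℂ)
            (fun t => z ^ (n - 1) * qPoch ((q : ℂ) * t / z) (q : ℂ) (n - 1) * f t) z := by
  obtain ⟨N, haN⟩ := ha
  obtain ⟨m, rfl⟩ : ∃ m, n = m + 1 := ⟨n - 1, by omega⟩
  simp only [Nat.add_sub_cancel]
  rw [mainlem q hq0 hq1 a N haN f hf (m + 1) z, jackson]
  have hterm : ∀ t : ℕ,
      (fun t => z ^ m * qPoch ((q : ℂ) * t / z) (q : ℂ) m * f t) (z * (q : ℂ) ^ t) * (q : ℂ) ^ t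
      = ∑ k ∈ range N, (z ^ m * a k * z ^ k)
          * (qPoch ((q : ℂ) ^ (t + 1)) (q : ℂ) m * ((q : ℂ) ^ (k + 1)) ^ t) := by
    intro t
    have harg : (q : ℂ) * (z * (q : ℂ) ^ t) / z = (q : ℂ) ^ (t + 1) := by
      field_simp
      ring
    simp only [harg]
    rw [hf (z * (q : ℂ) ^ t), tsum_eq_sum (s := range N) (fun k hk => by
      rw [haN k (by simpa using hk), zero_mul])]
    rw [Finset.mul_sum, Finset.sum_mul]
    apply Finset.sum_congr rfl
    intro k _
    have hpow : (z * (q : ℂ) ^ t) ^ k * (q : ℂ) ^ t = z ^ k * ((q : ℂ) ^ (k + 1)) ^ t := by ring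
    linear_combination (z ^ m * qPoch ((q : ℂ) ^ (t + 1)) (q : ℂ) m * a k) * hpow
  rw [tsum_congr hterm, Summable.tsum_finsetSum (fun k _ => Summable.mul_left _
    (summable_qPoch q hq0 hq1 m _ (qpow_norm_lt q hq0 hq1 _ (by omega))))]
  rw [Finset.mul_sum, Finset.mul_sum]
  apply Finset.sum_congr rfl
  intro k _
  rw [tsum_mul_left]
  have hS : (∑' t : ℕ, qPoch ((q : ℂ) ^ (t + 1)) (q : ℂ) m * ((q : ℂ) ^ (k + 1)) ^ t)
      = qPoch (q : ℂ) (q : ℂ) m / ∏ j ∈ range (m + 1), (1 - (q : ℂ) ^ (k + 1 + j)) :=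
    eq_div_of_mul_eq (prodD_ne q hq0 hq1 (m + 1) k) (Tlem q hq0 hq1 m k)
  rw [hS]
  have h1 : (∏ j ∈ range (m + 1), (1 - (q : ℂ) ^ (k + 1 + j))) ≠ 0 := prodD_ne q hq0 hq1 (m + 1) k
  have h2 : qPoch (q : ℂ) (q : ℂ) m ≠ 0 := qPoch_ne q hq0 hq1 m
  field_simp
  ring
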